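/- Let φ : ℝⁿ → ℝ be twice continuously differentiable and suppose there is a symmetric positive semidefinite linear map Q such that (∇²φ(x))² ⪯ Q for all x. Then for all x₁, x₂ ∈ ℝⁿ, ‖∇φ(x₁) − ∇φ(x₂)‖² ≤ ⟨x₁ − x₂, Q(x₁ − x₂)⟩. -/
import Mathlib

open scoped RealInnerProductSpace

/-- If `φ : ℝⁿ → ℝ` is twice continuously differentiable (with gradient `gradφ` and
Hessian `H`) and `Q` is a symmetric positive semidefinite linear map with
`(∇²φ(x))² ⪯ Q` for all `x`, then `‖∇φ(x₁) − ∇φ(x₂)‖² ≤ ⟨x₁ − x₂, Q(x₁ − x₂)⟩`. -/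
theorem gradient_diff_sq_le_of_hessian_sq_le {n : ℕ}
    (φ : EuclideanSpace ℝ (Fin n) → ℝ)
    (gradφ : EuclideanSpace ℝ (Fin n) → EuclideanSpace ℝ (Fin n))
    (H : EuclideanSpace ℝ (Fin n) → (EuclideanSpace ℝ (Fin n) →L[ℝ] EuclideanSpace ℝ (Fin n)))
    (Q : EuclideanSpace ℝ (Fin n) →L[ℝ] EuclideanSpace ℝ (Fin n))
    (hgrad : ∀ x, HasGradientAt φ (gradφ x) x)
    (hHess : ∀ x, HasFDerivAt gradφ (H x) x)
    (hHcont : Continuous H)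
    (hHsym : ∀ x v w, ⟪(H x) v, w⟫ = ⟪v, (H x) w⟫)
    (hQsym : ∀ v w, ⟪Q v, w⟫ = ⟪v, Q w⟫)
    (hQpsd : ∀ v, 0 ≤ ⟪v, Q v⟫)
    (hsq : ∀ x v, ⟪v, (H x) ((H x) v)⟫ ≤ ⟪v, Q v⟫) :
    ∀ x₁ x₂, ‖gradφ x₁ - gradφ x₂‖ ^ 2 ≤ ⟪x₁ - x₂, Q (x₁ - x₂)⟫ := by
  intro x₁ x₂
  set d := x₁ - x₂ with hd
  set C := Real.sqrt ⟪d, Q d⟫ with hC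
  have hCnn : 0 ≤ C := Real.sqrt_nonneg _
  -- curve g(t) = gradφ(x₂ + t • d)
  set g : ℝ → EuclideanSpace ℝ (Fin n) := fun t => gradφ (x₂ + t • d) with hg
  set g' : ℝ → EuclideanSpace ℝ (Fin n) := fun t => H (x₂ + t • d) d with hg'
  have hderiv : ∀ t : ℝ, HasDerivAt g (g' t) t := by
    intro t
    have hc : HasDerivAt (fun t : ℝ => x₂ + t • d) d t := by
      simpa using ((hasDerivAt_id t).smul_const d).const_add x₂
    exact (hHess (x₂ + t • d)).comp_hasDerivAt t hc
  have hbound : ∀ t : ℝ, ‖g' t‖ ≤ C := by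
    intro t
    set y := x₂ + t • d
    have h1 : ⟪d, H y (H y d)⟫ = ‖H y d‖ ^ 2 := by
      rw [← hHsym y d (H y d)]
      exact real_inner_self_eq_norm_sq _
    have h2 : ‖H y d‖ ^ 2 ≤ ⟪d, Q d⟫ := h1 ▸ hsq y d
    have := Real.sqrt_le_sqrt h2
    rwa [Real.sqrt_sq (norm_nonneg _)] at this
  have key : ‖g 1 - g 0‖ ≤ C :=
    norm_image_sub_le_of_norm_deriv_le_segment_01'
      (fun t _ => (hderiv t).hasDerivWithinAt)
      (fun t _ => hbound t)
  have hg1 : g 1 = gradφ x₁ := by simp [hg, hd]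
  have hg0 : g 0 = gradφ x₂ := by simp [hg]
  rw [hg1, hg0] at key
  calc ‖gradφ x₁ - gradφ x₂‖ ^ 2 ≤ C ^ 2 := by
        exact pow_le_pow_left₀ (norm_nonneg _) key 2
    _ = ⟪d, Q d⟫ := Real.sq_sqrt (hQpsd d)
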